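/- arXiv:1409.6853 — 2 statements merged into one kernel-verified Lean document; each statement's English description precedes it below -/
import Mathlib

section
/- (Estimate (hpm2) of Section 5.3 of the paper.) Let d ≥ 1 and let k ≥ 1 be an integer. Define the entire function F(ζ) := exp(−(ζ₁² + ⋯ + ζ_d²)^k) for ζ = (ζ₁,…,ζ_d) ∈ ℂ^d. Then there exists a constant C > 0 (depending only on d and k) such that |F(ζ)| ≤ exp(−(1/2)|Re ζ|^{2k} + C|Im ζ|^{2k}) for all ζ ∈ ℂ^d. -/
noncomputable section

open Finset

lemma pow_sub_pow_norm_le (w v : ℂ) (M : ℝ) (hw : ‖w‖ ≤ M) (hv : ‖v‖ ≤ M) :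
    ∀ n : ℕ, ‖w ^ (n+1) - v ^ (n+1)‖ ≤ (n+1) * ‖w - v‖ * M ^ n := by
  intro n
  induction n with
  | zero => simp
  | succ n ih =>
    have hM : 0 ≤ M := le_trans (norm_nonneg _) hw
    have key : w ^ (n+2) - v ^ (n+2) = w ^ (n+1) * (w - v) + (w ^ (n+1) - v ^ (n+1)) * v := by
      ring
    calc ‖w ^ (n+2) - v ^ (n+2)‖ ≤ ‖w ^ (n+1) * (w - v)‖ + ‖(w ^ (n+1) - v ^ (n+1)) * v‖ := by
          rw [key]; exact norm_add_le _ _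
      _ ≤ M ^ (n+1) * ‖w - v‖ + ((n+1) * ‖w - v‖ * M ^ n) * M := by
          rw [norm_mul, norm_mul]
          gcongr
          · calc ‖w ^ (n+1)‖ = ‖w‖ ^ (n+1) := norm_pow _ _
              _ ≤ M ^ (n+1) := pow_le_pow_left₀ (norm_nonneg _) hw _
      _ = ((n+1:ℕ)+1) * ‖w - v‖ * M ^ (n+1) := by push_cast; ring

lemma scalar_est (k : ℕ) (hk : 1 ≤ k) :
    ∃ C > (0:ℝ), ∀ r s : ℝ, 0 ≤ r → 0 ≤ s →
      2 * k * s * (r + s) ^ (2*k - 1) ≤ (1/2) * r ^ (2*k) + C * s ^ (2*k) := by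
  set ε : ℝ := ((k : ℝ) * 2 ^ (2*k+1))⁻¹ with hε
  have hk0 : (0:ℝ) < k := by exact_mod_cast hk
  have hεpos : 0 < ε := by positivity
  have hε1 : ε ≤ 1 := by
    rw [hε]
    rw [inv_le_one_iff₀]
    right
    have h2 : (1:ℝ) ≤ 2 ^ (2*k+1) := one_le_pow₀ (by norm_num)
    have hk1 : (1:ℝ) ≤ k := by exact_mod_cast hk
    nlinarith
  refine ⟨2 * k * (2/ε) ^ (2*k-1), by positivity, fun r s hr hs => ?_⟩
  rcases le_or_gt s (ε * r) with h | h
  · have h1 : r + s ≤ 2 * r := by nlinarith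
    have hB : (r+s) ^ (2*k-1) ≤ (2*r) ^ (2*k-1) := pow_le_pow_left₀ (by positivity) h1 _
    have hkey : 2 * (k:ℝ) * s * (r + s) ^ (2*k-1) ≤ 2 * k * (ε * r) * (2*r) ^ (2*k-1) :=
      mul_le_mul (by nlinarith) hB (by positivity) (by positivity)
    have hrr : r * r ^ (2*k-1) = r ^ (2*k) := by
      rw [← pow_succ']
      congr 1
      omega
    have h2 : 2 * (k:ℝ) * (ε * r) * (2*r) ^ (2*k-1) = 2 * k * ε * 2^(2*k-1) * r ^ (2*k) := by
      rw [mul_pow]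
      linear_combination (2 * (k:ℝ) * ε * 2^(2*k-1)) * hrr
    have h3 : 2 * (k:ℝ) * ε * 2^(2*k-1) = 1/2 := by
      rw [hε, show 2*k+1 = (2*k-1) + 2 by omega, pow_add]
      have hne : ((k:ℝ) * (2 ^ (2*k-1) * 2 ^ 2)) ≠ 0 := by positivity
      field_simp
    calc 2 * (k:ℝ) * s * (r + s) ^ (2*k-1) ≤ 2 * k * ε * 2^(2*k-1) * r ^ (2*k) := by
          rw [← h2]; exact hkey
      _ = (1/2) * r ^ (2*k) := by rw [h3]
      _ ≤ (1/2) * r ^ (2*k) + 2 * k * (2/ε) ^ (2*k-1) * s ^ (2*k) :=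
          le_add_of_nonneg_right (by positivity)
  · have hr' : r ≤ s / ε := by
      rw [le_div_iff₀ hεpos]
      nlinarith
    have h1 : r + s ≤ 2 * s / ε := by
      have hss : s ≤ s / ε := by
        rw [le_div_iff₀ hεpos]; nlinarith
      have h2e : 2 * s / ε = s / ε + s / ε := by ring
      linarith
    have hB : (r+s) ^ (2*k-1) ≤ (2*s/ε) ^ (2*k-1) := pow_le_pow_left₀ (by positivity) h1 _
    have hkey : 2 * (k:ℝ) * s * (r + s) ^ (2*k-1) ≤ 2 * k * s * (2*s/ε) ^ (2*k-1) :=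
      mul_le_mul_of_nonneg_left hB (by positivity)
    have hss : s * s ^ (2*k-1) = s ^ (2*k) := by
      rw [← pow_succ']
      congr 1
      omega
    have h2 : 2 * (k:ℝ) * s * (2*s/ε) ^ (2*k-1) = 2 * k * (2/ε) ^ (2*k-1) * s ^ (2*k) := by
      rw [show (2*s/ε) = (2/ε) * s by ring, mul_pow]
      linear_combination (2 * (k:ℝ) * (2/ε) ^ (2*k-1)) * hss
    calc 2 * (k:ℝ) * s * (r + s) ^ (2*k-1) ≤ 2 * k * (2/ε) ^ (2*k-1) * s ^ (2*k) := by
          rw [← h2]; exact hkey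
      _ ≤ (1/2) * r ^ (2*k) + 2 * k * (2/ε) ^ (2*k-1) * s ^ (2*k) :=
          le_add_of_nonneg_left (by positivity)

/-- estimate (hpm2) of Section 5.3: the entire function
`F(ζ) = exp(-(ζ₁² + ⋯ + ζ_d²)^k)` satisfies
`|F(ζ)| ≤ exp(-(1/2)|Re ζ|^{2k} + C|Im ζ|^{2k})` on `ℂ^d`, for some `C > 0` depending only
on `d` and `k`, where `|Re ζ|` and `|Im ζ|` are the Euclidean norms of the componentwise
real and imaginary parts. -/
theorem statement17 (d k : ℕ) (hd : 1 ≤ d) (hk : 1 ≤ k) :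
    ∃ C > (0 : ℝ), ∀ ζ : Fin d → ℂ,
      ‖Complex.exp (-(∑ j, ζ j ^ 2) ^ k)‖ ≤
        Real.exp (-(1 / 2) * Real.sqrt (∑ j, (ζ j).re ^ 2) ^ (2 * k) +
          C * Real.sqrt (∑ j, (ζ j).im ^ 2) ^ (2 * k)) := by
  obtain ⟨C, hC, hCest⟩ := scalar_est k hk
  refine ⟨C, hC, fun ζ => ?_⟩
  set x : Fin d → ℝ := fun j => (ζ j).re
  set y : Fin d → ℝ := fun j => (ζ j).im
  set r : ℝ := Real.sqrt (∑ j, x j ^ 2) with hrdef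
  set s : ℝ := Real.sqrt (∑ j, y j ^ 2) with hsdef
  have hr : 0 ≤ r := Real.sqrt_nonneg _
  have hs : 0 ≤ s := Real.sqrt_nonneg _
  have hx2 : ∑ j, x j ^ 2 = r ^ 2 := (Real.sq_sqrt (by positivity)).symm
  have hy2 : ∑ j, y j ^ 2 = s ^ 2 := (Real.sq_sqrt (by positivity)).symm
  set z : ℂ := ∑ j, ζ j ^ 2 with hz
  have hzre : z.re = r ^ 2 - s ^ 2 := by
    rw [hz, Complex.re_sum]
    rw [← hx2, ← hy2, ← Finset.sum_sub_distrib]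
    congr 1; ext j
    rw [pow_two, Complex.mul_re]; ring
  have hzim : z.im = 2 * ∑ j, x j * y j := by
    rw [hz, Complex.im_sum, Finset.mul_sum]
    congr 1; ext j
    rw [pow_two, Complex.mul_im]; ring
  have hcs : |∑ j, x j * y j| ≤ r * s := by
    have h1 : (∑ j, x j * y j) ^ 2 ≤ (∑ j, x j ^ 2) * (∑ j, y j ^ 2) :=
      Finset.sum_mul_sq_le_sq_mul_sq Finset.univ x y
    calc |∑ j, x j * y j| = Real.sqrt ((∑ j, x j * y j) ^ 2) := (Real.sqrt_sq_eq_abs _).symm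
      _ ≤ Real.sqrt ((r*s)^2) := by
          apply Real.sqrt_le_sqrt
          rw [mul_pow]
          rw [← hx2, ← hy2] ; exact h1
      _ = r * s := by rw [Real.sqrt_sq (by positivity)]
  -- bounds
  have habs_re : |z.re| ≤ r^2 + s^2 := by
    rw [hzre, abs_le]; constructor <;> nlinarith
  have habs_im : |z.im| ≤ 2 * (r * s) := by
    rw [hzim, abs_mul, abs_two]; linarith
  have hznorm : ‖z‖ ≤ (r + s)^2 := by
    calc ‖z‖ ≤ |z.re| + |z.im| := Complex.norm_le_abs_re_add_abs_im z
      _ ≤ (r^2 + s^2) + 2 * (r * s) := add_le_add habs_re habs_im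
      _ = (r+s)^2 := by ring
  have hvnorm : ‖((r^2 : ℝ) : ℂ)‖ ≤ (r+s)^2 := by
    rw [Complex.norm_real]
    rw [Real.norm_eq_abs, abs_of_nonneg (by positivity)]
    nlinarith
  have hdiff : ‖z - ((r^2 : ℝ) : ℂ)‖ ≤ 2 * s * (r + s) := by
    calc ‖z - ((r^2:ℝ):ℂ)‖ ≤ |(z - ((r^2:ℝ):ℂ)).re| + |(z - ((r^2:ℝ):ℂ)).im| :=
          Complex.norm_le_abs_re_add_abs_im _
      _ ≤ s^2 + 2*(r*s) := by
          apply add_le_add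
          · simp only [Complex.sub_re, Complex.ofReal_re, hzre]
            rw [show r^2 - s^2 - r^2 = -(s^2) by ring, abs_neg, abs_of_nonneg (by positivity)]
          · simp only [Complex.sub_im, Complex.ofReal_im, sub_zero]
            exact habs_im
      _ ≤ 2 * s * (r + s) := by nlinarith
  -- key power bound
  have hpow : ‖z ^ k - ((r^2:ℝ):ℂ) ^ k‖ ≤ 2 * k * s * (r + s) ^ (2*k - 1) := by
    obtain ⟨m, hm⟩ : ∃ m, k = m + 1 := ⟨k - 1, by omega⟩
    subst hm
    calc ‖z ^ (m+1) - ((r^2:ℝ):ℂ) ^ (m+1)‖ ≤ ((m:ℝ)+1) * ‖z - ((r^2:ℝ):ℂ)‖ * ((r+s)^2) ^ m :=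
          pow_sub_pow_norm_le z _ _ hznorm hvnorm m
      _ = ((m:ℝ)+1) * ‖z - ((r^2:ℝ):ℂ)‖ * ((r+s)^2) ^ m := by push_cast; ring
      _ ≤ ((m:ℝ)+1) * (2 * s * (r + s)) * ((r+s)^2) ^ m := by gcongr
      _ = 2 * ((m:ℝ)+1) * s * (r + s) ^ (2*(m+1) - 1) := by
          rw [← pow_mul, show 2*(m+1) - 1 = 1 + 2*m by omega, pow_add, pow_one]
          ring
      _ = 2 * ((m+1 : ℕ):ℝ) * s * (r + s) ^ (2*(m+1) - 1) := by push_cast; ring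
  -- conclude on real parts
  have hre : (1/2) * r ^ (2*k) - C * s ^ (2*k) ≤ (z ^ k).re := by
    have h1 : (z ^ k).re ≥ (((r^2:ℝ):ℂ) ^ k).re - ‖z ^ k - ((r^2:ℝ):ℂ) ^ k‖ := by
      have := Complex.abs_re_le_norm (z ^ k - ((r^2:ℝ):ℂ) ^ k)
      have h2 : (z ^ k - ((r^2:ℝ):ℂ) ^ k).re = (z^k).re - (((r^2:ℝ):ℂ)^k).re := by
        simp
      rw [h2] at this
      have := neg_abs_le ((z^k).re - (((r^2:ℝ):ℂ)^k).re)
      have h3 : -(‖z ^ k - ((r^2:ℝ):ℂ) ^ k‖) ≤ (z^k).re - (((r^2:ℝ):ℂ)^k).re := by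
        calc -(‖z ^ k - ((r^2:ℝ):ℂ) ^ k‖) ≤ -|(z^k).re - (((r^2:ℝ):ℂ)^k).re| := by
              simp only [neg_le_neg_iff]
              rw [← h2]
              exact Complex.abs_re_le_norm _
          _ ≤ (z^k).re - (((r^2:ℝ):ℂ)^k).re := neg_abs_le _
        
      linarith
    have h4 : (((r^2:ℝ):ℂ) ^ k).re = r ^ (2*k) := by
      rw [← Complex.ofReal_pow, Complex.ofReal_re, ← pow_mul, mul_comm]
    have h5 := hCest r s hr hs
    rw [h4] at h1
    linarith
  -- finish
  rw [Complex.norm_exp]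
  apply Real.exp_le_exp.mpr
  rw [Complex.neg_re]
  linarith [hre]

end
end

section
/- (Pointwise Gevrey-type bound from the Cauchy estimates, Section 5.3 of the paper.) Let d ≥ 1 and let k ≥ 1 be an integer, and let f(ξ) := exp(−|ξ|^{2k}) on ℝ^d. Then there exists a constant C > 0 such that for every multi-index α ∈ ℕ^d and every ξ ∈ ℝ^d, |∂^α f(ξ)| ≤ C^{|α|+1} (α!)^{1 − 1/(2k)} exp(−(1/2)((|ξ| − R_α)₊)^{2k}), where R_α := (1+|α|)^{1/(2k)} and (·)₊ denotes the positive part. -/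
open MeasureTheory

noncomputable section

/-- `ℝ^d` with the Euclidean structure. -/
abbrev Ed (d : ℕ) := EuclideanSpace ℝ (Fin d)

/-- The partial derivative `∂_i g` of a function `g : ℝ^d → ℝ`. -/
def pderiv (d : ℕ) (i : Fin d) (g : Ed d → ℝ) : Ed d → ℝ :=
  fun x => fderiv ℝ g x (EuclideanSpace.single i 1)

/-- The iterated partial derivative `∂^α g = ∂₁^{α₁} ⋯ ∂_d^{α_d} g` for a multi-index
`α ∈ ℕ^d`. -/
def multiDeriv (d : ℕ) (α : Fin d → ℕ) (g : Ed d → ℝ) : Ed d → ℝ :=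
  (List.finRange d).foldr (fun i h => (pderiv d i)^[α i] h) g

section Aux

open Real Complex Nat Finset
variable {d : ℕ}

lemma cauchy1 {g : ℂ → ℂ} (hg : Differentiable ℂ g) {c : ℂ} {ρ M : ℝ} (hρ : 0 < ρ)
    (hM : ∀ w : ℂ, ‖w - c‖ ≤ ρ → ‖g w‖ ≤ M) (m : ℕ) :
    ‖iteratedDeriv m g c‖ ≤ m ! * ρ⁻¹ ^ m * M := by
  lift ρ to NNReal using hρ.le with R hR
  subst hR
  have hR0 : 0 < R := by exact_mod_cast hρ
  have h := hg.hasFPowerSeriesOnBall c hR0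
  have h1 : iteratedDeriv m g c = m ! • (cauchyPowerSeries g c R m fun _ => (1:ℂ)) := by
    rw [iteratedDeriv_eq_iteratedFDeriv, ← h.factorial_smul (1:ℂ) m]
  rw [h1, ← Nat.cast_smul_eq_nsmul ℂ, norm_smul]
  have h2 : ‖(cauchyPowerSeries g c R m fun _ => (1:ℂ))‖ ≤ ‖cauchyPowerSeries g c R m‖ := by
    simpa using (cauchyPowerSeries g c R m).le_opNorm fun _ => (1:ℂ)
  have h3 : ‖cauchyPowerSeries g c R m‖ ≤
      ((2 * π)⁻¹ * ∫ θ : ℝ in (0)..2 * π, ‖g (circleMap c R θ)‖) * |(R:ℝ)|⁻¹ ^ m :=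
    norm_cauchyPowerSeries_le g c R m
  have hMc : 0 ≤ M := le_trans (norm_nonneg _) (hM c (by simpa using hρ.le))
  have h4 : (∫ θ : ℝ in (0)..2 * π, ‖g (circleMap c R θ)‖) ≤ 2 * π * M := by
    have : (∫ θ : ℝ in (0)..2 * π, ‖g (circleMap c R θ)‖) ≤
        ∫ _ : ℝ in (0)..2 * π, M := by
      apply intervalIntegral.integral_mono_on Real.two_pi_pos.le
      · exact ((hg.continuous.comp (continuous_circleMap c R)).norm).intervalIntegrable _ _
      · exact intervalIntegrable_const
      · intro θ _
        apply hM
        simp [circleMap, _root_.abs_of_nonneg hρ.le]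
    simpa [mul_comm] using this
  calc ‖(m ! : ℂ)‖ * ‖(cauchyPowerSeries g c R m fun _ => (1:ℂ))‖
      ≤ m ! * (((2 * π)⁻¹ * (2 * π * M)) * |(R:ℝ)|⁻¹ ^ m) := by
        rw [Complex.norm_natCast]
        apply mul_le_mul_of_nonneg_left _ (by positivity)
        refine le_trans h2 (le_trans h3 ?_)
        apply mul_le_mul_of_nonneg_right _ (by positivity)
        exact mul_le_mul_of_nonneg_left h4 (by positivity)
    _ = m ! * (R:ℝ)⁻¹ ^ m * M := by
        rw [inv_mul_cancel_left₀ Real.two_pi_pos.ne']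
        rw [_root_.abs_of_nonneg hρ.le]; ring

variable {d : ℕ}

/-- Complex partial derivative in direction `i`. -/
noncomputable def cd (i : Fin d) (g : (Fin d → ℂ) → ℂ) : (Fin d → ℂ) → ℂ :=
  fun z => fderiv ℂ g z (Pi.single i 1)

lemma cd_contDiff {g : (Fin d → ℂ) → ℂ} (hg : ContDiff ℂ ⊤ g) (i : Fin d) :
    ContDiff ℂ ⊤ (cd i g) := by
  exact (hg.fderiv_right (le_refl _)).clm_apply contDiff_const

lemma cd_iter_contDiff {g : (Fin d → ℂ) → ℂ} (hg : ContDiff ℂ ⊤ g) (i : Fin d) (m : ℕ) :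
    ContDiff ℂ ⊤ ((cd i)^[m] g) := by
  induction m generalizing g with
  | zero => exact hg
  | succ m ih => rw [Function.iterate_succ_apply]; exact ih (cd_contDiff hg i)

lemma deriv_slice {g : (Fin d → ℂ) → ℂ} (hg : ContDiff ℂ ⊤ g) (i : Fin d) (c : Fin d → ℂ) :
    deriv (fun t : ℂ => g (c + t • (Pi.single i 1 : Fin d → ℂ))) =
      fun t => (cd i g) (c + t • (Pi.single i 1 : Fin d → ℂ)) := by
  funext t
  have h1 : HasDerivAt (fun t : ℂ => c + t • (Pi.single i 1 : Fin d → ℂ)) (Pi.single i 1) t := by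
    simpa using ((hasDerivAt_id t).smul_const (Pi.single i 1 : Fin d → ℂ)).const_add c
  have h2 := ((hg.differentiable (by simp)) _).hasFDerivAt.comp_hasDerivAt t h1
  exact h2.deriv

lemma slice_differentiable {g : (Fin d → ℂ) → ℂ} (hg : ContDiff ℂ ⊤ g) (i : Fin d)
    (c : Fin d → ℂ) : Differentiable ℂ (fun t : ℂ => g (c + t • (Pi.single i 1 : Fin d → ℂ))) := by
  intro t
  have h1 : HasDerivAt (fun t : ℂ => c + t • (Pi.single i 1 : Fin d → ℂ)) (Pi.single i 1) t := by
    simpa using ((hasDerivAt_id t).smul_const (Pi.single i 1 : Fin d → ℂ)).const_add c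
  exact (((hg.differentiable (by simp)) _).hasFDerivAt.comp_hasDerivAt t h1).differentiableAt

lemma iteratedDeriv_slice {g : (Fin d → ℂ) → ℂ} (hg : ContDiff ℂ ⊤ g) (i : Fin d)
    (c : Fin d → ℂ) (m : ℕ) :
    iteratedDeriv m (fun t : ℂ => g (c + t • (Pi.single i 1 : Fin d → ℂ))) 0 = (cd i)^[m] g c := by
  induction m generalizing g with
  | zero => simp
  | succ m ih =>
    rw [iteratedDeriv_succ', deriv_slice hg i c, Function.iterate_succ_apply]
    exact ih (cd_contDiff hg i)

/-- One-variable iterated Cauchy estimate for a partial derivative. -/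
lemma cauchy_cd {g : (Fin d → ℂ) → ℂ} (hg : ContDiff ℂ ⊤ g) (i : Fin d) (c : Fin d → ℂ)
    {ρ M : ℝ} (hρ : 0 < ρ)
    (hM : ∀ t : ℂ, ‖t‖ ≤ ρ → ‖g (c + t • (Pi.single i 1 : Fin d → ℂ))‖ ≤ M) (m : ℕ) :
    ‖(cd i)^[m] g c‖ ≤ m ! * ρ⁻¹ ^ m * M := by
  rw [← iteratedDeriv_slice hg i c m]
  exact cauchy1 (slice_differentiable hg i c) hρ (fun w hw => hM w (by simpa using hw)) m

/-- The iterated complex partial derivative along a list of coordinates. -/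
noncomputable def cmd (l : List (Fin d)) (α : Fin d → ℕ) (g : (Fin d → ℂ) → ℂ) :
    (Fin d → ℂ) → ℂ :=
  l.foldr (fun i h => (cd i)^[α i] h) g

lemma cmd_contDiff {g : (Fin d → ℂ) → ℂ} (hg : ContDiff ℂ ⊤ g) (l : List (Fin d))
    (α : Fin d → ℕ) : ContDiff ℂ ⊤ (cmd l α g) := by
  induction l with
  | nil => exact hg
  | cons i l ih => exact cd_iter_contDiff ih i (α i)

/-- Multi-dimensional Cauchy estimate on a polydisc. -/
lemma cauchy_cmd (l : List (Fin d)) (hl : l.Nodup) {g : (Fin d → ℂ) → ℂ}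
    (hg : ContDiff ℂ ⊤ g) (α : Fin d → ℕ) {ρ : ℝ} (hρ : 0 < ρ) (z : Fin d → ℂ) (M : ℝ)
    (hM : ∀ w : Fin d → ℂ,
      (∀ j, if j ∈ l then ‖w j - z j‖ ≤ ρ else w j = z j) → ‖g w‖ ≤ M) :
    ‖cmd l α g z‖ ≤ (l.map fun i => ((α i)! : ℝ)).prod * ρ⁻¹ ^ (l.map α).sum * M := by
  induction l generalizing z with
  | nil =>
    simpa [cmd] using hM z (by simp)
  | cons i l ih =>
    obtain ⟨hil, hln⟩ := List.nodup_cons.mp hl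
    have key : ∀ t : ℂ, ‖t‖ ≤ ρ →
        ‖cmd l α g (z + t • (Pi.single i 1 : Fin d → ℂ))‖ ≤
          (l.map fun i => ((α i)! : ℝ)).prod * ρ⁻¹ ^ (l.map α).sum * M := by
      intro t ht
      refine ih hln _ ?_
      intro w hw
      refine hM w ?_
      intro j
      by_cases hjl : j ∈ l
      · have hji : j ≠ i := fun h => hil (h ▸ hjl)
        have := hw j
        simp only [hjl, if_true] at this
        simp only [List.mem_cons, hjl, or_true, if_true]
        simpa [Pi.single_apply, hji] using this
      · have := hw j
        simp only [hjl, if_false] at this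
        by_cases hji : j = i
        · subst hji
          simp only [List.mem_cons, true_or, if_true, this]
          simpa [Pi.single_apply] using ht
        · simp only [List.mem_cons, hji, hjl, or_self, if_false, this]
          simp [Pi.single_apply, hji]
    have hcd : ContDiff ℂ ⊤ (cmd l α g) := cmd_contDiff hg l α
    have := cauchy_cd hcd i z hρ key (α i)
    calc ‖cmd (i :: l) α g z‖
        = ‖(cd i)^[α i] (cmd l α g) z‖ := rfl
      _ ≤ (α i)! * ρ⁻¹ ^ (α i) *
            ((l.map fun i => ((α i)! : ℝ)).prod * ρ⁻¹ ^ (l.map α).sum * M) := this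
      _ = ((i :: l).map fun i => ((α i)! : ℝ)).prod * ρ⁻¹ ^ ((i :: l).map α).sum * M := by
          simp [pow_add]; ring
/-- The real points inside `ℂ^d`. -/
noncomputable def jmap (d : ℕ) : Ed d →L[ℝ] (Fin d → ℂ) :=
  (ContinuousLinearMap.pi fun i => Complex.ofRealCLM.comp (ContinuousLinearMap.proj i)).comp
    (PiLp.continuousLinearEquiv 2 ℝ (fun _ : Fin d => ℝ)).toContinuousLinearMap

lemma jmap_apply (x : Ed d) (i : Fin d) : jmap d x i = (x i : ℂ) := rfl

lemma jmap_single (i : Fin d) :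
    jmap d (EuclideanSpace.single i (1:ℝ)) = (Pi.single i 1 : Fin d → ℂ) := by
  funext j
  rw [jmap_apply]
  rcases eq_or_ne j i with h | h
  · subst h; simp [EuclideanSpace.single_apply, Pi.single_apply]
  · simp [EuclideanSpace.single_apply, Pi.single_apply, h]

lemma pderiv_jmap {g : (Fin d → ℂ) → ℂ} (hg : ContDiff ℂ ⊤ g) (i : Fin d) :
    pderiv d i (fun x => (g (jmap d x)).re) = fun x => ((cd i g) (jmap d x)).re := by
  funext x
  have hgd : HasFDerivAt g (fderiv ℂ g (jmap d x)) (jmap d x) :=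
    ((hg.differentiable (by simp)) _).hasFDerivAt
  have h1 : HasFDerivAt (fun x => (g (jmap d x)).re)
      (Complex.reCLM.comp (((fderiv ℂ g (jmap d x)).restrictScalars ℝ).comp (jmap d))) x :=
    (Complex.reCLM.hasFDerivAt.comp _ ((hgd.restrictScalars ℝ).comp x (jmap d).hasFDerivAt))
  show fderiv ℝ (fun x => (g (jmap d x)).re) x (EuclideanSpace.single i 1) = _
  rw [h1.fderiv]
  simp [jmap_single, cd]

lemma pderiv_iter_jmap {g : (Fin d → ℂ) → ℂ} (hg : ContDiff ℂ ⊤ g) (i : Fin d) (m : ℕ) :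
    (pderiv d i)^[m] (fun x => (g (jmap d x)).re) =
      fun x => (((cd i)^[m] g) (jmap d x)).re := by
  induction m generalizing g with
  | zero => rfl
  | succ m ih =>
    rw [Function.iterate_succ_apply, Function.iterate_succ_apply,
      pderiv_jmap hg i, ih (cd_contDiff hg i)]

lemma multiDeriv_jmap_aux (l : List (Fin d)) {g : (Fin d → ℂ) → ℂ} (hg : ContDiff ℂ ⊤ g)
    (α : Fin d → ℕ) :
    l.foldr (fun i h => (pderiv d i)^[α i] h) (fun x => (g (jmap d x)).re) =
      fun x => ((cmd l α g) (jmap d x)).re := by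
  induction l with
  | nil => rfl
  | cons i l ih =>
    show (pderiv d i)^[α i] _ = _
    rw [ih, pderiv_iter_jmap (cmd_contDiff hg l α) i (α i)]
    rfl

lemma multiDeriv_jmap {g : (Fin d → ℂ) → ℂ} (hg : ContDiff ℂ ⊤ g) (α : Fin d → ℕ) :
    multiDeriv d α (fun x => (g (jmap d x)).re) =
      fun x => ((cmd (List.finRange d) α g) (jmap d x)).re :=
  multiDeriv_jmap_aux (List.finRange d) hg α

lemma split_pow {a b δ : ℝ} (k : ℕ) (ha : 0 ≤ a) (hb : 0 ≤ b) (hδ : 0 < δ) :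
    (a + b) ^ k ≤ ((1 + δ) * a) ^ k + ((1 + δ⁻¹) * b) ^ k := by
  rcases le_or_gt b (δ * a) with h | h
  · have h1 : a + b ≤ (1 + δ) * a := by nlinarith
    calc (a + b) ^ k ≤ ((1 + δ) * a) ^ k := pow_le_pow_left₀ (by linarith) h1 k
      _ ≤ _ := le_add_of_nonneg_right (by positivity)
  · have h1 : a + b ≤ (1 + δ⁻¹) * b := by
      have : a ≤ δ⁻¹ * b := by
        rw [le_inv_mul_iff₀ hδ]; linarith
      linarith
    calc (a + b) ^ k ≤ ((1 + δ⁻¹) * b) ^ k := pow_le_pow_left₀ (by linarith) h1 k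
      _ ≤ _ := le_add_of_nonneg_left (by positivity)

lemma re_pow_lower {u V : ℝ} (k : ℕ) (hu : 0 ≤ u) {v : ℂ} (hv : ‖v‖ ≤ V) :
    2 * u ^ k - (u + V) ^ k ≤ (((u : ℂ) + v) ^ k).re := by
  have hV : 0 ≤ V := le_trans (norm_nonneg _) hv
  have hS : ((u : ℂ) + v) ^ k - (u : ℂ) ^ k =
      ∑ m ∈ range k, (u : ℂ) ^ m * v ^ (k - m) * (k.choose m) := by
    rw [add_pow, Finset.sum_range_succ]
    simp
  have hSn : ‖((u : ℂ) + v) ^ k - (u : ℂ) ^ k‖ ≤ (u + V) ^ k - u ^ k := by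
    rw [hS]
    have h2 : (u + V) ^ k - u ^ k = ∑ m ∈ range k, u ^ m * V ^ (k - m) * (k.choose m) := by
      rw [add_pow, Finset.sum_range_succ]
      simp
    rw [h2]
    refine le_trans (norm_sum_le _ _) (Finset.sum_le_sum fun m _ => ?_)
    have h3 : ‖(u : ℂ)‖ = u := by rw [Complex.norm_real]; exact abs_of_nonneg hu
    rw [norm_mul, norm_mul, norm_pow, norm_pow, h3, Complex.norm_natCast]
    have hvk : ‖v‖ ^ (k - m) ≤ V ^ (k - m) := pow_le_pow_left₀ (norm_nonneg _) hv _
    have h7 : (0:ℝ) ≤ u ^ m := pow_nonneg hu m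
    have h8 : (0:ℝ) ≤ (k.choose m : ℝ) := Nat.cast_nonneg _
    exact mul_le_mul_of_nonneg_right (mul_le_mul_of_nonneg_left hvk h7) h8
  have h4 : |(((u : ℂ) + v) ^ k - (u : ℂ) ^ k).re| ≤ (u + V) ^ k - u ^ k :=
    le_trans (Complex.abs_re_le_norm _) hSn
  have h5 : (((u : ℂ) + v) ^ k).re = u ^ k + ((((u : ℂ) + v) ^ k - (u : ℂ) ^ k)).re := by
    simp only [Complex.sub_re]
    have : ((u:ℂ) ^ k).re = u ^ k := by norm_cast
    rw [this]; ring
  rw [h5]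
  have := abs_le.mp h4
  nlinarith [this.1]

lemma amgm_eps {a b ε : ℝ} (hε : 0 < ε) : 2 * a * b ≤ ε * a ^ 2 + ε⁻¹ * b ^ 2 := by
  have h := sq_nonneg (ε * a - b)
  have h2 : 0 < ε⁻¹ := inv_pos.mpr hε
  have key : ε * (ε * a ^ 2 + ε⁻¹ * b ^ 2 - 2 * a * b) = (ε * a - b) ^ 2 := by
    field_simp; ring
  nlinarith [mul_pos hε h2]

lemma eps_pow_le (k : ℕ) (hk : 1 ≤ k) : ((1 : ℝ) + ((8 : ℝ) * k)⁻¹) ^ (2 * k) ≤ 3 / 2 := by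
  have hk0 : (0:ℝ) < (k:ℝ) := by exact_mod_cast hk
  have hε : (0:ℝ) < ((8:ℝ) * k)⁻¹ := by positivity
  have h1 : ((1 : ℝ) + ((8 : ℝ) * k)⁻¹) ^ (2 * k) ≤ Real.exp (((8:ℝ)*k)⁻¹) ^ (2*k) := by
    apply pow_le_pow_left₀ (by positivity)
    exact Real.add_one_le_exp _ |>.trans_eq' (by ring_nf)
  have h2 : Real.exp (((8:ℝ)*k)⁻¹) ^ (2*k) = Real.exp ((2*k : ℕ) * ((8:ℝ)*k)⁻¹) := by
    rw [Real.exp_nat_mul]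
  have h3 : ((2*k : ℕ) : ℝ) * ((8:ℝ)*k)⁻¹ = 4⁻¹ := by
    push_cast
    field_simp
    ring
  have h4 : Real.exp (4⁻¹ : ℝ) ≤ 3 / 2 := by
    have h5 : Real.exp (4⁻¹ : ℝ) ^ (4:ℕ) = Real.exp 1 := by
      rw [← Real.exp_nat_mul]; norm_num
    have h6 : Real.exp 1 ≤ (3/2 : ℝ) ^ (4:ℕ) := by
      nlinarith [Real.exp_one_lt_d9]
    refine le_of_pow_le_pow_left₀ (n := 4) (by norm_num) (by norm_num) ?_
    rw [h5]; exact h6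
  calc ((1 : ℝ) + ((8 : ℝ) * k)⁻¹) ^ (2 * k)
      ≤ Real.exp (((2*k : ℕ) : ℝ) * ((8:ℝ)*k)⁻¹) := h1.trans_eq h2
    _ = Real.exp (4⁻¹ : ℝ) := by rw [h3]
    _ ≤ 3/2 := h4

lemma Fc_polydisc_bound (d k : ℕ) (hk : 1 ≤ k) (ξ : Fin d → ℝ) {ρ : ℝ} (hρ : 0 < ρ)
    (w : Fin d → ℂ) (hw : ∀ j, ‖w j - (ξ j : ℂ)‖ ≤ ρ) :
    ‖Complex.exp (-(∑ j, w j ^ 2) ^ k)‖ ≤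
      Real.exp (((d : ℝ) * (1 + 8 * k) ^ 2) ^ k * ρ ^ (2 * k)) *
        Real.exp (-(1 / 2) * (∑ j, ξ j ^ 2) ^ k) := by
  have hk0 : (0:ℝ) < (k:ℝ) := by exact_mod_cast hk
  set ε : ℝ := ((8:ℝ) * k)⁻¹ with hεdef
  have hε : 0 < ε := by positivity
  have hεinv : ε⁻¹ = 8 * k := by rw [hεdef, inv_inv]
  set u : ℝ := ∑ j, ξ j ^ 2 with hudef
  have hu : 0 ≤ u := Finset.sum_nonneg fun j _ => sq_nonneg _
  set v : ℂ := (∑ j, w j ^ 2) - (u : ℂ) with hvdef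
  set B : ℝ := (d : ℝ) * (1 + 8 * k) with hBdef
  have hB : 0 ≤ B := by positivity
  -- bound on ‖v‖
  have hv : ‖v‖ ≤ ε * u + B * ρ ^ 2 := by
    have hvs : v = ∑ j, (w j ^ 2 - (ξ j : ℂ) ^ 2) := by
      rw [hvdef, hudef, Finset.sum_sub_distrib]
      push_cast
      ring
    rw [hvs]
    have hterm : ∀ j, ‖w j ^ 2 - (ξ j : ℂ) ^ 2‖ ≤ ε * ξ j ^ 2 + (1 + ε⁻¹) * ρ ^ 2 := by
      intro j
      have heq : w j ^ 2 - (ξ j : ℂ) ^ 2 =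
          (w j - ξ j) ^ 2 + 2 * (ξ j : ℂ) * (w j - ξ j) := by ring
      rw [heq]
      refine le_trans (norm_add_le _ _) ?_
      have h1 : ‖(w j - (ξ j:ℂ)) ^ 2‖ ≤ ρ ^ 2 := by
        rw [norm_pow]; exact pow_le_pow_left₀ (norm_nonneg _) (hw j) 2
      have h2 : ‖2 * (ξ j : ℂ) * (w j - ξ j)‖ ≤ 2 * |ξ j| * ρ := by
        rw [norm_mul, norm_mul]
        simp only [Complex.norm_ofNat, Complex.norm_real, Real.norm_eq_abs]
        exact mul_le_mul_of_nonneg_left (hw j) (by positivity)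
      have h3 : 2 * |ξ j| * ρ ≤ ε * ξ j ^ 2 + ε⁻¹ * ρ ^ 2 := by
        have := amgm_eps (a := |ξ j|) (b := ρ) hε
        simpa [_root_.sq_abs] using this
      nlinarith [sq_nonneg ρ]
    refine le_trans (norm_sum_le _ _) ?_
    calc ∑ j, ‖w j ^ 2 - (ξ j : ℂ) ^ 2‖ ≤ ∑ j, (ε * ξ j ^ 2 + (1 + ε⁻¹) * ρ ^ 2) :=
          Finset.sum_le_sum fun j _ => hterm j
      _ = ε * u + B * ρ ^ 2 := by
          rw [Finset.sum_add_distrib, ← Finset.mul_sum, Finset.sum_const, Finset.card_univ]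
          simp [hεinv, hBdef, hudef]
          ring
  -- lower bound for the real part
  have hsum : (∑ j, w j ^ 2) = (u : ℂ) + v := by rw [hvdef]; ring
  have hre := re_pow_lower k hu hv
  have hUV : u + (ε * u + B * ρ ^ 2) = (1 + ε) * u + B * ρ ^ 2 := by ring
  have hsplit : ((1 + ε) * u + B * ρ ^ 2) ^ k ≤
      (((1 + ε)^2) ^ k) * u ^ k + ((1 + 8 * k) * B) ^ k * (ρ ^ 2) ^ k := by
    have := split_pow (a := (1 + ε) * u) (b := B * ρ ^ 2) k
      (by positivity) (by positivity) hε
    calc ((1 + ε) * u + B * ρ ^ 2) ^ k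
        ≤ ((1 + ε) * ((1 + ε) * u)) ^ k + ((1 + ε⁻¹) * (B * ρ ^ 2)) ^ k := this
      _ = (((1 + ε)^2) ^ k) * u ^ k + ((1 + 8 * k) * B) ^ k * (ρ ^ 2) ^ k := by
          rw [hεinv,
            show (1+ε)*((1+ε)*u) = (1+ε)^2*u by ring,
            show ((1:ℝ)+8*(k:ℝ))*(B*ρ^2) = (((1:ℝ)+8*(k:ℝ))*B)*ρ^2 by ring,
            mul_pow, mul_pow]
  have heps : ((1 + ε)^2) ^ k ≤ 3 / 2 := by
    rw [← pow_mul, mul_comm 2 k, mul_comm k 2]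
    exact eps_pow_le k hk
  have hupow : 0 ≤ u ^ k := pow_nonneg hu k
  have hK : ((1 + 8 * k) * B) ^ k * (ρ ^ 2) ^ k = ((d : ℝ) * (1 + 8 * k) ^ 2) ^ k * ρ ^ (2 * k) := by
    rw [hBdef, pow_mul ρ 2 k,
      show ((1:ℝ)+8*(k:ℝ))*((d:ℝ)*(1+8*(k:ℝ))) = (d:ℝ)*(1+8*(k:ℝ))^2 by ring]
  have hre2 : (1/2) * u ^ k - ((d : ℝ) * (1 + 8 * k) ^ 2) ^ k * ρ ^ (2 * k) ≤
      (((u : ℂ) + v) ^ k).re := by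
    have h6 : (u + (ε * u + B * ρ ^ 2)) ^ k ≤
        (3/2) * u ^ k + ((d : ℝ) * (1 + 8 * k) ^ 2) ^ k * ρ ^ (2 * k) := by
      rw [hUV, ← hK]
      refine le_trans hsplit ?_
      have := mul_le_mul_of_nonneg_right heps hupow
      linarith
    nlinarith [hre]
  -- conclude
  rw [Complex.norm_exp, ← Real.exp_add]
  apply Real.exp_le_exp.mpr
  rw [hsum]
  simp only [Complex.neg_re]
  linarith [hre2]

noncomputable def Fc (d k : ℕ) : (Fin d → ℂ) → ℂ :=
  fun z => Complex.exp (-(∑ j, z j ^ 2) ^ k)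

lemma Fc_contDiff (d k : ℕ) : ContDiff ℂ ⊤ (Fc d k) := by
  apply ContDiff.cexp
  apply ContDiff.neg
  apply ContDiff.pow
  exact ContDiff.sum fun j _ =>
    ((ContinuousLinearMap.proj j : (Fin d → ℂ) →L[ℂ] ℂ).contDiff).pow 2

end Aux

section Main

open Real Complex Nat Finset

/-- pointwise Gevrey-type bound from the Cauchy estimates: for
`f(ξ) = exp(-|ξ|^{2k})` there is `C > 0` such that for every multi-index `α` and `ξ ∈ ℝ^d`,
`|∂^α f(ξ)| ≤ C^{|α|+1} (α!)^{1-1/(2k)} exp(-(1/2)((|ξ| - R_α)₊)^{2k})` with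
`R_α = (1+|α|)^{1/(2k)}`. -/
theorem statement18 (d k : ℕ) (hd : 1 ≤ d) (hk : 1 ≤ k) :
    ∃ C > (0 : ℝ), ∀ (α : Fin d → ℕ) (ξ : Ed d),
      |multiDeriv d α (fun η : Ed d => Real.exp (-‖η‖ ^ (2 * k))) ξ| ≤
        C ^ ((∑ i, α i) + 1) *
          ((∏ i, Nat.factorial (α i) : ℕ) : ℝ) ^ ((1 : ℝ) - 1 / (2 * k)) *
          Real.exp (-(1 / 2) *
            max (‖ξ‖ - ((1 : ℝ) + (∑ i, α i : ℕ)) ^ ((1 : ℝ) / (2 * k))) 0 ^ (2 * k)) := by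
  set K₀ : ℝ := ((d : ℝ) * (1 + 8 * k) ^ 2) ^ k with hK₀def
  have hK₀0 : 0 ≤ K₀ := by positivity
  refine ⟨Real.exp K₀, Real.exp_pos _, ?_⟩
  intro α ξ
  set n : ℕ := ∑ i, α i with hndef
  set P : ℕ := ∏ i, Nat.factorial (α i) with hPdef
  have hkR : (0:ℝ) < (k:ℝ) := by exact_mod_cast hk
  have h1n : (0:ℝ) < 1 + (n:ℝ) := by positivity
  set ρ : ℝ := ((1 : ℝ) + (n : ℝ)) ^ ((1 : ℝ) / (2 * (k:ℝ))) with hρdef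
  have hρ : 0 < ρ := Real.rpow_pos_of_pos h1n _
  have hρpow : ρ ^ (2 * k) = 1 + (n:ℝ) := by
    rw [hρdef, ← Real.rpow_natCast (((1:ℝ) + (n:ℝ)) ^ ((1:ℝ)/(2*(k:ℝ)))) (2*k),
      ← Real.rpow_mul h1n.le,
      show (1:ℝ)/(2*(k:ℝ)) * ((2*k : ℕ):ℝ) = 1 by push_cast; field_simp,
      Real.rpow_one]
  -- the function is the real part of the complex function `Fc`
  have husum : 0 ≤ ∑ j, ξ j ^ 2 := Finset.sum_nonneg fun j _ => sq_nonneg _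
  have hnorm : ‖ξ‖ ^ (2*k) = (∑ j, ξ j ^ 2) ^ k := by
    rw [EuclideanSpace.norm_eq, pow_mul]
    congr 1
    rw [Real.sq_sqrt]
    · simp [Real.norm_eq_abs, _root_.sq_abs]
    · exact Finset.sum_nonneg fun j _ => sq_nonneg _
  have hfeq : (fun η : Ed d => Real.exp (-‖η‖ ^ (2*k))) =
      fun x : Ed d => ((Fc d k) (jmap d x)).re := by
    funext x
    have h1 : Fc d k (jmap d x) = ((Real.exp (-(∑ j, x j ^ 2) ^ k) : ℝ) : ℂ) := by
      rw [Complex.ofReal_exp]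
      show Complex.exp _ = _
      congr 1
      push_cast
      rfl
    rw [h1, Complex.ofReal_re]
    congr 1
    rw [pow_mul, EuclideanSpace.norm_eq, Real.sq_sqrt]
    · simp [Real.norm_eq_abs, _root_.sq_abs]
    · exact Finset.sum_nonneg fun j _ => sq_nonneg _
  have hmd : multiDeriv d α (fun x : Ed d => ((Fc d k) (jmap d x)).re) ξ =
      ((cmd (List.finRange d) α (Fc d k)) (jmap d ξ)).re :=
    congrFun (multiDeriv_jmap (Fc_contDiff d k) α) ξ
  rw [hfeq, hmd]
  -- polydisc bound
  set M : ℝ := Real.exp (K₀ * ρ ^ (2*k)) * Real.exp (-(1/2) * (∑ j, ξ j ^ 2) ^ k) with hMdef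
  have hMb : ∀ w : Fin d → ℂ,
      (∀ j, if j ∈ List.finRange d then ‖w j - jmap d ξ j‖ ≤ ρ else w j = jmap d ξ j) →
      ‖Fc d k w‖ ≤ M := by
    intro w hw
    refine Fc_polydisc_bound d k hk (fun j => ξ j) hρ w ?_
    intro j
    have := hw j
    simpa [List.mem_finRange, jmap_apply] using this
  have hcau := cauchy_cmd (List.finRange d) (List.nodup_finRange d) (Fc_contDiff d k) α hρ
    (jmap d ξ) M hMb
  have hprod : ((List.finRange d).map fun i => ((α i)! : ℝ)).prod = (P : ℝ) := by
    rw [← List.ofFn_eq_map, List.prod_ofFn, hPdef]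
    push_cast
    rfl
  have hsum : ((List.finRange d).map α).sum = n := by
    rw [← List.ofFn_eq_map, List.sum_ofFn, hndef]
  rw [hprod, hsum] at hcau
  have habs : |((cmd (List.finRange d) α (Fc d k)) (jmap d ξ)).re| ≤
      ‖(cmd (List.finRange d) α (Fc d k)) (jmap d ξ)‖ := Complex.abs_re_le_norm _
  -- numerology
  have hP1 : (1:ℝ) ≤ (P : ℝ) := by
    have : 0 < P := Finset.prod_pos fun i _ => Nat.factorial_pos _
    exact_mod_cast this
  have hPle : (P : ℝ) ≤ ((1:ℝ) + (n:ℝ)) ^ (n : ℕ) := by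
    have h1 : P ≤ n ! := Nat.le_of_dvd (Nat.factorial_pos n)
      (Nat.prod_factorial_dvd_factorial_sum _ _)
    have h2 : n ! ≤ (n+1) ^ n :=
      le_trans (Nat.factorial_le_pow n) (Nat.pow_le_pow_left (Nat.le_succ n) n)
    have : (P:ℝ) ≤ ((n+1 : ℕ) : ℝ) ^ (n:ℕ) := by exact_mod_cast le_trans h1 h2
    convert this using 2
    push_cast
    ring
  have hrpowP : (P : ℝ) ^ ((1:ℝ)/(2*(k:ℝ))) ≤ ρ ^ (n : ℕ) := by
    calc (P : ℝ) ^ ((1:ℝ)/(2*(k:ℝ)))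
        ≤ (((1:ℝ) + (n:ℝ)) ^ (n : ℕ)) ^ ((1:ℝ)/(2*(k:ℝ))) :=
          Real.rpow_le_rpow (by positivity) hPle (by positivity)
      _ = ρ ^ (n : ℕ) := by
          rw [← Real.rpow_natCast ((1:ℝ) + (n:ℝ)) n, ← Real.rpow_mul h1n.le, mul_comm,
            Real.rpow_mul h1n.le, Real.rpow_natCast]
  have hfactor : (P : ℝ) * ρ⁻¹ ^ (n:ℕ) ≤ (P : ℝ) ^ ((1:ℝ) - 1/(2*(k:ℝ))) := by
    have hsplitP : (P : ℝ) = (P : ℝ) ^ ((1:ℝ) - 1/(2*(k:ℝ))) * (P : ℝ) ^ ((1:ℝ)/(2*(k:ℝ))) := by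
      rw [← Real.rpow_add (by linarith : (0:ℝ) < (P:ℝ))]
      norm_num
    have h2 : (P : ℝ) ^ ((1:ℝ)/(2*(k:ℝ))) * ρ⁻¹ ^ (n:ℕ) ≤ 1 := by
      rw [inv_pow, mul_inv_le_iff₀ (by positivity), one_mul]
      exact hrpowP
    calc (P : ℝ) * ρ⁻¹ ^ (n:ℕ)
        = (P : ℝ) ^ ((1:ℝ) - 1/(2*(k:ℝ))) * ((P : ℝ) ^ ((1:ℝ)/(2*(k:ℝ))) * ρ⁻¹ ^ (n:ℕ)) := by
          rw [← mul_assoc, ← hsplitP]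
      _ ≤ (P : ℝ) ^ ((1:ℝ) - 1/(2*(k:ℝ))) * 1 :=
          mul_le_mul_of_nonneg_left h2 (Real.rpow_nonneg (by positivity) _)
      _ = _ := mul_one _
  have hexp1 : Real.exp (K₀ * ρ ^ (2*k)) = Real.exp K₀ ^ (n + 1) := by
    rw [hρpow, ← Real.exp_nat_mul]
    congr 1
    push_cast
    ring
  have hexp2 : Real.exp (-(1/2) * (∑ j, ξ j ^ 2) ^ k) ≤
      Real.exp (-(1/2) * max (‖ξ‖ - ρ) 0 ^ (2*k)) := by
    apply Real.exp_le_exp.mpr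
    have h0m : (0:ℝ) ≤ max (‖ξ‖ - ρ) 0 := le_max_right _ _
    have h1m : max (‖ξ‖ - ρ) 0 ≤ ‖ξ‖ := max_le (by linarith [hρ.le]) (norm_nonneg ξ)
    have h2m : max (‖ξ‖ - ρ) 0 ^ (2*k) ≤ (∑ j, ξ j ^ 2) ^ k := by
      rw [← hnorm]
      exact pow_le_pow_left₀ h0m h1m _
    nlinarith [h2m]
  -- final chain
  calc |((cmd (List.finRange d) α (Fc d k)) (jmap d ξ)).re|
      ≤ (P : ℝ) * ρ⁻¹ ^ (n:ℕ) * M := le_trans habs hcau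
    _ = ((P : ℝ) * ρ⁻¹ ^ (n:ℕ)) *
          (Real.exp K₀ ^ (n + 1) * Real.exp (-(1/2) * (∑ j, ξ j ^ 2) ^ k)) := by
        rw [hMdef, hexp1]
    _ ≤ (P : ℝ) ^ ((1:ℝ) - 1/(2*(k:ℝ))) *
          (Real.exp K₀ ^ (n + 1) * Real.exp (-(1/2) * max (‖ξ‖ - ρ) 0 ^ (2*k))) := by
        apply mul_le_mul hfactor _ (by positivity) (Real.rpow_nonneg (by positivity) _)
        exact mul_le_mul_of_nonneg_left hexp2 (by positivity)
    _ = Real.exp K₀ ^ (n + 1) * (P : ℝ) ^ ((1:ℝ) - 1/(2*(k:ℝ))) *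
          Real.exp (-(1/2) * max (‖ξ‖ - ρ) 0 ^ (2*k)) := by ring

end Main

end
end
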